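/- For measurable sets B, C and counting measures ψ, ν, the partition function built from the restricted kernel κ^{(C,ψ)}(x,μ) = κ(x, ψ+μ)·1_C(x) satisfies Z_B^{(C,ψ)}(ν) = Z_{B∩C}(ψ+ν). -/

import Mathlib

open MeasureTheory ENNReal

attribute [local instance] Classical.propDecidable

namespace Gibbs

variable {X : Type*} [MeasurableSpace X]

noncomputable def diracSum (l : List X) : Measure X :=
  (l.map fun x => Measure.dirac x).sum

noncomputable def diracSumFin {m : ℕ} (v : Fin m → X) : Measure X :=
  ∑ i, Measure.dirac (v i)

noncomputable def kappaList (κ : X → Measure X → ℝ≥0∞) : List X → Measure X → ℝ≥0∞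
  | [], _ => 1
  | x :: l, μ => κ x (μ + diracSum l) * kappaList κ l μ

noncomputable def kappaFin (κ : X → Measure X → ℝ≥0∞) {m : ℕ}
    (v : Fin m → X) (μ : Measure X) : ℝ≥0∞ :=
  kappaList κ (List.ofFn v) μ

def Cocycle (κ : X → Measure X → ℝ≥0∞) : Prop :=
  ∀ (x y : X) (μ : Measure X),
    κ x μ * κ y (μ + Measure.dirac x) = κ y μ * κ x (μ + Measure.dirac y)

def IsLocalization (Bseq : ℕ → Set X) : Prop :=
  Monotone Bseq ∧ (∀ j, MeasurableSet (Bseq j)) ∧ (⋃ j, Bseq j) = Set.univ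

def IsCounting (Bseq : ℕ → Set X) (μ : Measure X) : Prop :=
  ∀ j, ∃ n : ℕ, μ (Bseq j) = n

structure IsFactorial (fact : Measure X → (m : ℕ) → Measure (Fin m → X)) : Prop where
  one : ∀ μ : Measure X, fact μ 1 = Measure.map (fun x => (fun _ : Fin 1 => x)) μ
  symm : ∀ (μ : Measure X) (m : ℕ) (σ : Equiv.Perm (Fin m)),
    Measure.map (fun v => v ∘ σ) (fact μ m) = fact μ m
  recur : ∀ (μ : Measure X) (m : ℕ) (A : Set (Fin (m + 1) → X)), MeasurableSet A →
    fact μ (m + 1) A =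
      ∫⁻ v, (μ {x | Fin.snoc v x ∈ A}
        - ∑ j : Fin m, Set.indicator A (fun _ => (1 : ℝ≥0∞)) (Fin.snoc v (v j))) ∂ fact μ m

noncomputable def enat (c : ℝ≥0∞) : ℕ := ⌊c.toReal⌋₊

noncomputable def elog (c : ℝ≥0∞) : EReal :=
  if c = 0 then ⊥ else if c = ⊤ then ⊤ else ((Real.log c.toReal : ℝ) : EReal)

noncomputable def eexp (x : EReal) : ℝ≥0∞ :=
  if x = ⊥ then 0 else if x = ⊤ then ⊤ else ENNReal.ofReal (Real.exp x.toReal)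

noncomputable def hamiltonian (κ : X → Measure X → ℝ≥0∞)
    (fact : Measure X → (m : ℕ) → Measure (Fin m → X)) (μ ψ : Measure X) : EReal :=
  if μ Set.univ = 0 then 0
  else if μ Set.univ = ⊤ then ⊤
  else - elog ((((enat (μ Set.univ)).factorial : ℝ≥0∞))⁻¹ *
    ∫⁻ v : Fin (enat (μ Set.univ)) → X, kappaFin κ v ψ ∂ fact μ (enat (μ Set.univ)))

noncomputable def partitionZ (κ : X → Measure X → ℝ≥0∞) (lam : Measure X)
    (B : Set X) (ψ : Measure X) : ℝ≥0∞ :=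
  1 + ∑' m : ℕ, (((m + 1).factorial : ℝ≥0∞))⁻¹ *
    ∫⁻ v : Fin (m + 1) → X, kappaFin κ v ψ ∂(Measure.pi fun _ : Fin (m + 1) => lam.restrict B)

noncomputable def kernelRestrict (κ : X → Measure X → ℝ≥0∞) (C : Set X) (ψ : Measure X) :
    X → Measure X → ℝ≥0∞ :=
  fun x μ => κ x (ψ + μ) * Set.indicator C (fun _ => (1 : ℝ≥0∞)) x

lemma kappaList_kernelRestrict (κ : X → Measure X → ℝ≥0∞) (C : Set X) (ψ ν : Measure X) :
    ∀ l : List X, kappaList (kernelRestrict κ C ψ) l ν =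
      kappaList κ l (ψ + ν) * (l.map (C.indicator fun _ => (1 : ℝ≥0∞))).prod
  | [] => by simp [kappaList]
  | x :: l => by
    simp only [kappaList, kernelRestrict, List.map_cons, List.prod_cons,
      kappaList_kernelRestrict κ C ψ ν l, add_assoc]
    ring

lemma pi_restrict_aux {ι : Type*} [Fintype ι]
    (μ : Measure X) {C : Set X} (hC : MeasurableSet C) :
    Measure.pi (fun _ : ι => μ.restrict C) =
      (Measure.pi fun _ : ι => μ).restrict (Set.univ.pi fun _ => C) := by
  have hpiC : MeasurableSet (Set.univ.pi fun _ : ι => C) :=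
    MeasurableSet.univ_pi fun _ => hC
  ext s hs
  rw [Measure.restrict_apply hs, Measure.pi_def, Measure.pi_def,
    toMeasure_apply _ _ hs, toMeasure_apply _ _ (hs.inter hpiC)]
  simp only [OuterMeasure.pi]
  set p : Set (ι → X) → ℝ≥0∞ := piPremeasure (fun _ => μ.toOuterMeasure) with hp
  set p' : Set (ι → X) → ℝ≥0∞ := piPremeasure (fun _ => (μ.restrict C).toOuterMeasure) with hp'
  have hrest : ∀ A : Set X, (μ.restrict C).toOuterMeasure A = μ (A ∩ C) := fun A =>
    Measure.restrict_apply' hC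
  have ha : ∀ t : Set (ι → X), p (t ∩ Set.univ.pi fun _ => C) ≤ p' t := by
    intro t
    rw [hp, hp']
    simp only [piPremeasure]
    refine Finset.prod_le_prod' fun i _ => ?_
    rw [hrest]
    refine measure_mono ?_
    rintro x ⟨y, ⟨hyt, hyC⟩, rfl⟩
    exact ⟨⟨y, hyt, rfl⟩, hyC i (Set.mem_univ i)⟩
  have hb : ∀ t : Set (ι → X), p' t ≤ p t := by
    intro t
    rw [hp, hp']
    simp only [piPremeasure]
    refine Finset.prod_le_prod' fun i _ => ?_
    rw [hrest]
    exact measure_mono Set.inter_subset_left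
  refine le_antisymm ?_ ?_
  · have hzero : ∀ i : ι, OuterMeasure.boundedBy p' {x : ι → X | x i ∉ C} = 0 := by
      intro i
      refine le_antisymm (le_trans (OuterMeasure.boundedBy_le _) ?_) zero_le
      have hemp : (Function.eval i '' {x : ι → X | x i ∉ C}) ∩ C = ∅ := by
        ext y
        simp only [Set.mem_inter_iff, Set.mem_image, Set.mem_empty_iff_false, iff_false]
        rintro ⟨⟨x, hxi, rfl⟩, hyC⟩
        exact hxi hyC
      have hi : (μ.restrict C).toOuterMeasure (Function.eval i '' {x : ι → X | x i ∉ C}) = 0 := by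
        rw [hrest, hemp]; exact measure_empty
      rw [hp']
      simp only [piPremeasure]
      exact le_of_eq (Finset.prod_eq_zero (Finset.mem_univ i) hi)
    have hcover : (s \ Set.univ.pi fun _ : ι => C) ⊆ ⋃ i : ι, {x : ι → X | x i ∉ C} := by
      rintro x ⟨hxs, hx⟩
      rw [Set.mem_univ_pi] at hx
      push_neg at hx
      obtain ⟨i, hi⟩ := hx
      exact Set.mem_iUnion.2 ⟨i, hi⟩
    have hz : OuterMeasure.boundedBy p' (s \ Set.univ.pi fun _ : ι => C) = 0 := by
      refine le_antisymm ?_ zero_le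
      calc OuterMeasure.boundedBy p' (s \ Set.univ.pi fun _ : ι => C)
          ≤ OuterMeasure.boundedBy p' (⋃ i : ι, {x : ι → X | x i ∉ C}) := measure_mono hcover
        _ ≤ ∑' i : ι, OuterMeasure.boundedBy p' {x : ι → X | x i ∉ C} := measure_iUnion_le _
        _ = 0 := by simp [hzero]
    calc OuterMeasure.boundedBy p' s
        ≤ OuterMeasure.boundedBy p' (s ∩ Set.univ.pi fun _ => C) +
            OuterMeasure.boundedBy p' (s \ Set.univ.pi fun _ => C) := by
          refine le_trans (measure_mono ?_) (measure_union_le _ _)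
          intro x hx
          by_cases h : x ∈ Set.univ.pi fun _ : ι => C
          · exact Or.inl ⟨hx, h⟩
          · exact Or.inr ⟨hx, h⟩
      _ = OuterMeasure.boundedBy p' (s ∩ Set.univ.pi fun _ => C) := by rw [hz, add_zero]
      _ ≤ OuterMeasure.boundedBy p (s ∩ Set.univ.pi fun _ => C) :=
          (OuterMeasure.le_boundedBy.2 fun t =>
            le_trans (OuterMeasure.boundedBy_le _) (hb t)) _
  · have h1 : OuterMeasure.restrict (Set.univ.pi fun _ : ι => C) (OuterMeasure.boundedBy p) ≤
        OuterMeasure.boundedBy p' := by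
      refine OuterMeasure.le_boundedBy.2 fun t => ?_
      rw [OuterMeasure.restrict_apply]
      exact le_trans (OuterMeasure.boundedBy_le _) (ha t)
    have h2 := h1 s
    rwa [OuterMeasure.restrict_apply] at h2

theorem partitionZ_kernelRestrict
    (lam : Measure X)
    (κ : X → Measure X → ℝ≥0∞)
    (hκmeas : Measurable fun p : X × Measure X => κ p.1 p.2)
    (hκfin : ∀ (x : X) (μ : Measure X), κ x μ ≠ ⊤)
    (hcoc : Cocycle κ)
    (B C : Set X) (hB : MeasurableSet B) (hC : MeasurableSet C)
    (ψ ν : Measure X) :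
    partitionZ (kernelRestrict κ C ψ) lam B ν = partitionZ κ lam (B ∩ C) (ψ + ν) := by
  unfold partitionZ
  congr 1
  refine tsum_congr fun m => ?_
  congr 1
  set n := m + 1 with hn
  have hpiC : MeasurableSet (Set.univ.pi fun _ : Fin n => C) :=
    MeasurableSet.univ_pi fun _ => hC
  have hfun : ∀ v : Fin n → X, kappaFin (kernelRestrict κ C ψ) v ν =
      (Set.univ.pi fun _ : Fin n => C).indicator (fun v => kappaFin κ v (ψ + ν)) v := by
    intro v
    rw [kappaFin, kappaList_kernelRestrict, List.map_ofFn, List.prod_ofFn]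
    by_cases h : v ∈ Set.univ.pi fun _ : Fin n => C
    · rw [Set.indicator_of_mem h]
      have h1 : ∀ i, (C.indicator fun _ => (1 : ℝ≥0∞)) (v i) = 1 := fun i =>
        Set.indicator_of_mem (h i (Set.mem_univ i)) _
      simp [Function.comp, h1, kappaFin]
    · rw [Set.indicator_of_notMem h]
      have hx : ∃ i, v i ∉ C := by
        rw [Set.mem_univ_pi] at h
        push_neg at h
        exact h
      obtain ⟨i, hi⟩ := hx
      rw [Finset.prod_eq_zero (Finset.mem_univ i)
        (by simp [Function.comp, Set.indicator_of_notMem hi]), mul_zero]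
  rw [lintegral_congr hfun, lintegral_indicator hpiC]
  have hmeas : ((Measure.pi fun _ : Fin n => lam.restrict B).restrict
      (Set.univ.pi fun _ : Fin n => C)) = Measure.pi fun _ : Fin n => lam.restrict (B ∩ C) := by
    rw [← pi_restrict_aux (lam.restrict B) hC, Measure.restrict_restrict hC, Set.inter_comm C B]
  rw [← hmeas]

end Gibbs
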